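/- arXiv:2003.04400 — 2 statements merged into one kernel-verified Lean document; each statement's English description precedes it below -/
import Mathlib

section
/- Let G ∈ C²(ℝ) be nonnegative, let u ∈ C²(ℝ^N) be a bounded solution of Δu = G'(u) on ℝ^N with G(u(x)) > 0 for all x, and set ω = √(G∘u). Then ω satisfies the pointwise identity -Δω + G''(u)ω = 2(G(u) - |∇u|²/2)(√G)''(u) in ℝ^N. -/
open MeasureTheory

/-- The Laplacian of a scalar function on `ℝ^N`, as the sum of the second
partial derivatives in the coordinate directions. -/
noncomputable def laplacian {N : ℕ} (f : EuclideanSpace ℝ (Fin N) → ℝ)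
    (x : EuclideanSpace ℝ (Fin N)) : ℝ :=
  ∑ i : Fin N,
    fderiv ℝ (fun y => fderiv ℝ f y (EuclideanSpace.single i 1)) x
      (EuclideanSpace.single i 1)

theorem omega_identity (N : ℕ) (G : ℝ → ℝ) (hG : ContDiff ℝ 2 G)
    (hGnonneg : ∀ s, 0 ≤ G s)
    (u : EuclideanSpace ℝ (Fin N) → ℝ) (hu : ContDiff ℝ 2 u)
    (hbdd : ∃ M : ℝ, ∀ x, |u x| ≤ M)
    (heq : ∀ x, laplacian u x = deriv G (u x))
    (hGu : ∀ x, 0 < G (u x))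
    (ω : EuclideanSpace ℝ (Fin N) → ℝ)
    (hω : ∀ x, ω x = Real.sqrt (G (u x))) :
    ∀ x, - laplacian ω x + deriv (deriv G) (u x) * ω x =
      2 * (G (u x) - ‖gradient u x‖ ^ 2 / 2) *
        deriv (deriv (fun s => Real.sqrt (G s))) (u x) := by
  classical
  intro x
  -- basic differentiability facts
  have hGdiff : Differentiable ℝ G := hG.differentiable two_ne_zero
  have hG2 : ContDiff ℝ 1 (deriv G) := by
    have h2 : (2 : WithTop ℕ∞) = 1 + 1 := by norm_num
    rw [h2] at hG
    exact (contDiff_succ_iff_deriv.mp hG).2.2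
  have hG'diff : Differentiable ℝ (deriv G) := hG2.differentiable one_ne_zero
  have hudiff : Differentiable ℝ u := hu.differentiable two_ne_zero
  -- notation
  set f : ℝ → ℝ := fun s => Real.sqrt (G s) with hfdef
  set g : ℝ → ℝ := fun s => deriv G s / (2 * Real.sqrt (G s)) with hgdef
  set c : ℝ → ℝ := fun s =>
    (deriv (deriv G) s * (2 * Real.sqrt (G s)) - deriv G s * (2 * g s)) /
      (2 * Real.sqrt (G s)) ^ 2 with hcdef
  -- first derivative of f on the set where G > 0
  have hfd : ∀ s : ℝ, 0 < G s → HasDerivAt f (g s) s := fun s hs =>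
    (hGdiff s).hasDerivAt.sqrt (ne_of_gt hs)
  -- second derivative of f
  have hgd : ∀ s : ℝ, 0 < G s → HasDerivAt g (c s) s := by
    intro s hs
    have hden : HasDerivAt (fun t => 2 * Real.sqrt (G t)) (2 * g s) s :=
      ((hGdiff s).hasDerivAt.sqrt (ne_of_gt hs)).const_mul 2
    have hnum : HasDerivAt (deriv G) (deriv (deriv G) s) s :=
      (hG'diff s).hasDerivAt
    have hne : 2 * Real.sqrt (G s) ≠ 0 := by
      positivity
    exact hnum.div hden hne
  -- the set where G > 0 is open
  have hSopen : IsOpen {s : ℝ | 0 < G s} := isOpen_lt continuous_const hG.continuous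
  -- deriv f = g eventually near u x
  have hEq : deriv f =ᶠ[nhds (u x)] g :=
    Filter.eventually_of_mem (hSopen.mem_nhds (hGu x)) fun s hs => (hfd s hs).deriv
  have hder2 : deriv (deriv f) (u x) = c (u x) := by
    rw [hEq.deriv_eq]
    exact (hgd (u x) (hGu x)).deriv
  -- ω = f ∘ u
  have hωfun : ω = fun y => f (u y) := funext hω
  -- fderiv of ω
  have hωf : ∀ y, HasFDerivAt ω (g (u y) • fderiv ℝ u y) y := by
    intro y
    rw [hωfun]
    exact (hfd (u y) (hGu y)).comp_hasFDerivAt y (hudiff y).hasFDerivAt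
  -- differentiability of the partial derivatives of u
  have hDu : ContDiff ℝ 1 (fderiv ℝ u) := hu.fderiv_right (by norm_num)
  have hB : ∀ i : Fin N,
      Differentiable ℝ (fun y => fderiv ℝ u y (EuclideanSpace.single i 1)) := by
    intro i
    exact ((ContinuousLinearMap.apply ℝ ℝ
      (EuclideanSpace.single i (1 : ℝ))).contDiff.comp hDu).differentiable one_ne_zero
  -- the key second-derivative computation for ω
  have hlap : laplacian ω x =
      g (u x) * laplacian u x +
        c (u x) * ∑ i : Fin N, (fderiv ℝ u x (EuclideanSpace.single i 1)) ^ 2 := by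
    unfold laplacian
    have key : ∀ i : Fin N,
        fderiv ℝ (fun y => fderiv ℝ ω y (EuclideanSpace.single i 1)) x
            (EuclideanSpace.single i 1) =
          g (u x) *
            fderiv ℝ (fun y => fderiv ℝ u y (EuclideanSpace.single i 1)) x
              (EuclideanSpace.single i 1) +
          c (u x) * (fderiv ℝ u x (EuclideanSpace.single i 1)) ^ 2 := by
      intro i
      set e : EuclideanSpace ℝ (Fin N) := EuclideanSpace.single i (1 : ℝ) with he
      have h1 : (fun y => fderiv ℝ ω y e) = fun y => g (u y) * fderiv ℝ u y e := by
        funext y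
        rw [(hωf y).fderiv]
        simp
      rw [h1]
      -- derivative of the product
      have hA : HasFDerivAt (fun y => g (u y)) (c (u x) • fderiv ℝ u x) x :=
        (hgd (u x) (hGu x)).comp_hasFDerivAt x (hudiff x).hasFDerivAt
      have hBd : HasFDerivAt (fun y => fderiv ℝ u y e)
          (fderiv ℝ (fun y => fderiv ℝ u y e) x) x := (hB i x).hasFDerivAt
      have : fderiv ℝ (fun y => g (u y) * fderiv ℝ u y e) x = _ := (hA.mul hBd).fderiv
      rw [this]
      simp only [ContinuousLinearMap.add_apply, ContinuousLinearMap.smul_apply,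
        smul_eq_mul]
      ring
    rw [funext fun i => key i]
    rw [Finset.sum_add_distrib, ← Finset.mul_sum, ← Finset.mul_sum]
  -- gradient norm squared
  have hgrad : ‖gradient u x‖ ^ 2 =
      ∑ i : Fin N, (fderiv ℝ u x (EuclideanSpace.single i 1)) ^ 2 := by
    have hco : ∀ i : Fin N, gradient u x i = fderiv ℝ u x (EuclideanSpace.single i 1) := by
      intro i
      have : (inner ℝ (gradient u x) (EuclideanSpace.single i (1 : ℝ)) : ℝ) =
          fderiv ℝ u x (EuclideanSpace.single i 1) := by
        unfold gradient
        exact InnerProductSpace.toDual_symm_apply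
      rw [← this, EuclideanSpace.inner_single_right]
      simp
    rw [EuclideanSpace.norm_eq]
    rw [Real.sq_sqrt (by positivity)]
    refine Finset.sum_congr rfl fun i _ => ?_
    rw [hco i]
    simp [sq_abs]
  -- put everything together
  rw [hlap, hω x, heq x, hder2, hgrad]
  -- pure algebra with square roots
  set S := ∑ i : Fin N, (fderiv ℝ u x (EuclideanSpace.single i 1)) ^ 2 with hS
  have hq : (0 : ℝ) < Real.sqrt (G (u x)) := Real.sqrt_pos.mpr (hGu x)
  have hq2 : Real.sqrt (G (u x)) ^ 2 = G (u x) :=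
    Real.sq_sqrt (le_of_lt (hGu x))
  rw [hgdef, hcdef]
  simp only [hgdef]
  rw [← hq2]
  field_simp
  rw [Real.sqrt_sq hq.le]
  ring
end

section
/- Let G ∈ C²(ℝ) be nonnegative and let u ∈ C²(ℝ^N) be a nonconstant bounded entire solution of Δu = G'(u) such that G(u(x)) > 0 for all x. Then u is stable (i.e., ∫(|∇v|² + G''(u)v²) ≥ 0 for all compactly supported v ∈ C¹) if and only if for every compactly supported μ ∈ C¹(ℝ^N): ∫_{ℝ^N} G(u)|∇μ|² dx ≥ ∫_{ℝ^N} (G(u) - |∇u|²/2)(-2(√G)''(u))√(G(u)) μ² dx. -/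
open MeasureTheory

namespace SChar

variable {N : ℕ}
local notation "E" => EuclideanSpace ℝ (Fin N)
noncomputable def e (i : Fin N) : EuclideanSpace ℝ (Fin N) := EuclideanSpace.single i (1:ℝ)

lemma gradient_apply (f : EuclideanSpace ℝ (Fin N) → ℝ) (x : E) (i : Fin N) :
    gradient f x i = fderiv ℝ f x (e i) := by
  have : fderiv ℝ f x (e i) = inner ℝ (gradient f x) (e i) := by
    rw [gradient]
    rw [← InnerProductSpace.toDual_symm_apply]
  rw [this, e, EuclideanSpace.inner_single_right]
  simp

lemma grad_norm_sq (f : EuclideanSpace ℝ (Fin N) → ℝ) (x : E) :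
    ‖gradient f x‖ ^ 2 = ∑ i, (fderiv ℝ f x (e i))^2 := by
  rw [EuclideanSpace.norm_eq, Real.sq_sqrt (by positivity)]
  refine Finset.sum_congr rfl fun i _ => ?_
  rw [Real.norm_eq_abs, sq_abs, gradient_apply]


variable {G : ℝ → ℝ}

lemma hSopen (hG : ContDiff ℝ 2 G) : IsOpen {t : ℝ | 0 < G t} :=
  isOpen_lt continuous_const hG.continuous

lemma hphi2 (hG : ContDiff ℝ 2 G) :
    ContDiffOn ℝ 2 (fun t => Real.sqrt (G t)) {t : ℝ | 0 < G t} := fun s hs =>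
  ((Real.contDiffAt_sqrt (ne_of_gt hs)).comp s hG.contDiffAt).contDiffWithinAt

lemma hphi_deriv_contDiffOn (hG : ContDiff ℝ 2 G) :
    ContDiffOn ℝ 1 (deriv (fun t => Real.sqrt (G t))) {t : ℝ | 0 < G t} := by
  exact ((contDiffOn_succ_iff_deriv_of_isOpen (n := 1) (hSopen hG)).1
    (by exact_mod_cast hphi2 hG)).2.2

lemma hphi_diff (hG : ContDiff ℝ 2 G) {s : ℝ} (hs : 0 < G s) :
    DifferentiableAt ℝ (fun t => Real.sqrt (G t)) s :=
  (((Real.contDiffAt_sqrt (ne_of_gt hs)).comp s hG.contDiffAt).differentiableAt (by norm_num))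

lemma hphi_deriv_diff (hG : ContDiff ℝ 2 G) {s : ℝ} (hs : 0 < G s) :
    DifferentiableAt ℝ (deriv (fun t => Real.sqrt (G t))) s :=
  ((((hphi_deriv_contDiffOn hG) s hs).differentiableWithinAt (by norm_num)).differentiableAt
    ((hSopen hG).mem_nhds hs))

lemma hphi_dd_contOn (hG : ContDiff ℝ 2 G) :
    ContinuousOn (deriv (deriv (fun t => Real.sqrt (G t)))) {t : ℝ | 0 < G t} := by
  exact (((contDiffOn_succ_iff_deriv_of_isOpen (n := 0) (hSopen hG)).1
    (by exact_mod_cast hphi_deriv_contDiffOn hG)).2.2).continuousOn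

lemma hphi_deriv_contOn (hG : ContDiff ℝ 2 G) :
    ContinuousOn (deriv (fun t => Real.sqrt (G t))) {t : ℝ | 0 < G t} :=
  (hphi_deriv_contDiffOn hG).continuousOn

/-- G' = 2 φ φ' on the positivity set. -/
lemma derivG_eq (hG : ContDiff ℝ 2 G) (hGnn : ∀ t, 0 ≤ G t) {s : ℝ} (hs : 0 < G s) :
    deriv G s = 2 * Real.sqrt (G s) * deriv (fun t => Real.sqrt (G t)) s := by
  have hφ := hphi_diff hG hs
  have h1 : HasDerivAt (fun t => Real.sqrt (G t)) (deriv (fun t => Real.sqrt (G t)) s) s :=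
    hφ.hasDerivAt
  have h2 : HasDerivAt (fun t => (Real.sqrt (G t))^2)
      (2 * Real.sqrt (G s) * deriv (fun t => Real.sqrt (G t)) s) s := by
    simpa [mul_comm, mul_assoc, mul_left_comm] using h1.fun_pow 2
  have h3 : (fun t => (Real.sqrt (G t))^2) = G := by
    funext t; exact Real.sq_sqrt (hGnn t)
  rw [h3] at h2
  exact h2.deriv

/-- G'' = 2 φ'² + 2 φ φ'' on the positivity set. -/
lemma derivderivG_eq (hG : ContDiff ℝ 2 G) (hGnn : ∀ t, 0 ≤ G t) {s : ℝ} (hs : 0 < G s) :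
    deriv (deriv G) s = 2 * (deriv (fun t => Real.sqrt (G t)) s)^2
      + 2 * Real.sqrt (G s) * deriv (deriv (fun t => Real.sqrt (G t))) s := by
  set φ := fun t => Real.sqrt (G t) with hφdef
  have hev : deriv G =ᶠ[nhds s] fun t => 2 * φ t * deriv φ t := by
    filter_upwards [(hSopen hG).mem_nhds hs] with t ht
    exact derivG_eq hG hGnn ht
  have h1 : HasDerivAt (fun t => 2 * φ t * deriv φ t)
      (2 * (deriv φ s)^2 + 2 * φ s * deriv (deriv φ) s) s := by
    have ha : HasDerivAt φ (deriv φ s) s := (hphi_diff hG hs).hasDerivAt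
    have hb : HasDerivAt (deriv φ) (deriv (deriv φ) s) s := (hphi_deriv_diff hG hs).hasDerivAt
    have := (ha.const_mul 2).fun_mul hb
    exact this.congr_deriv (by ring)
  have h2 : HasDerivAt (deriv G) (2 * (deriv φ s)^2 + 2 * φ s * deriv (deriv φ) s) s :=
    h1.congr_of_eventuallyEq hev
  exact h2.deriv





noncomputable def pd (f : EuclideanSpace ℝ (Fin N) → ℝ) (i : Fin N)
    (x : EuclideanSpace ℝ (Fin N)) : ℝ := fderiv ℝ f x (e i)

noncomputable def pdd (f : EuclideanSpace ℝ (Fin N) → ℝ) (i : Fin N)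
    (x : EuclideanSpace ℝ (Fin N)) : ℝ := fderiv ℝ (fun y => pd f i y) x (e i)

lemma grad_norm_sq' (f : EuclideanSpace ℝ (Fin N) → ℝ) (x : EuclideanSpace ℝ (Fin N)) :
    ‖gradient f x‖ ^ 2 = ∑ i, (pd f i x)^2 := grad_norm_sq f x

lemma contDiff_pd {f : EuclideanSpace ℝ (Fin N) → ℝ} (hf : ContDiff ℝ 2 f) (i : Fin N) :
    ContDiff ℝ 1 (pd f i) :=
  (hf.fderiv_right (by norm_num)).clm_apply contDiff_const

lemma cont_pd {f : EuclideanSpace ℝ (Fin N) → ℝ} (hf : ContDiff ℝ 1 f) (i : Fin N) :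
    Continuous (pd f i) :=
  ((hf.fderiv_right (m := 0) (by norm_num)).clm_apply contDiff_const).continuous

lemma cont_pdd {f : EuclideanSpace ℝ (Fin N) → ℝ} (hf : ContDiff ℝ 2 f) (i : Fin N) :
    Continuous (pdd f i) :=
  (((contDiff_pd hf i).fderiv_right (m := 0) (by norm_num)).clm_apply contDiff_const).continuous

lemma hcs_pd {f : EuclideanSpace ℝ (Fin N) → ℝ} (hf : ContDiff ℝ 1 f)
    (hsupp : HasCompactSupport f) (i : Fin N) : HasCompactSupport (pd f i) := by
  have h : HasCompactSupport (fderiv ℝ f) := hsupp.fderiv ℝ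
  exact h.comp_left (g := fun L : (EuclideanSpace ℝ (Fin N)) →L[ℝ] ℝ => L (e i)) rfl

lemma laplacian_eq_sum_pdd (f : EuclideanSpace ℝ (Fin N) → ℝ) (x : EuclideanSpace ℝ (Fin N)) :
    laplacian f x = ∑ i, pdd f i x := rfl

section Chain
variable {G : ℝ → ℝ} {u : EuclideanSpace ℝ (Fin N) → ℝ}

lemma hw2 (hG : ContDiff ℝ 2 G) (hu : ContDiff ℝ 2 u) (hGu : ∀ x, 0 < G (u x)) :
    ContDiff ℝ 2 (fun x => Real.sqrt (G (u x))) := by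
  rw [contDiff_iff_contDiffAt]
  intro x
  exact ((Real.contDiffAt_sqrt (ne_of_gt (hGu x))).comp (u x) hG.contDiffAt).comp x hu.contDiffAt

lemma hasfderiv_w (hG : ContDiff ℝ 2 G) (hu : ContDiff ℝ 2 u) (hGu : ∀ x, 0 < G (u x)) (x) :
    HasFDerivAt (fun x => Real.sqrt (G (u x)))
      (deriv (fun s => Real.sqrt (G s)) (u x) • fderiv ℝ u x) x := by
  have h1 : HasDerivAt (fun s => Real.sqrt (G s)) (deriv (fun s => Real.sqrt (G s)) (u x)) (u x) :=
    (hphi_diff hG (hGu x)).hasDerivAt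
  have h2 : HasFDerivAt u (fderiv ℝ u x) x :=
    (hu.differentiable (by norm_num) x).hasFDerivAt
  exact h1.comp_hasFDerivAt x h2

lemma pd_w (hG : ContDiff ℝ 2 G) (hu : ContDiff ℝ 2 u) (hGu : ∀ x, 0 < G (u x)) (i : Fin N) (x) :
    pd (fun x => Real.sqrt (G (u x))) i x = deriv (fun s => Real.sqrt (G s)) (u x) * pd u i x := by
  rw [pd, (hasfderiv_w hG hu hGu x).fderiv]
  rfl

lemma pd_comp_deriv (hG : ContDiff ℝ 2 G) (hu : ContDiff ℝ 2 u) (hGu : ∀ x, 0 < G (u x))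
    (i : Fin N) (x) :
    pd (fun y => deriv (fun s => Real.sqrt (G s)) (u y)) i x
      = deriv (deriv (fun s => Real.sqrt (G s))) (u x) * pd u i x := by
  have h1 : HasDerivAt (deriv (fun s => Real.sqrt (G s)))
      (deriv (deriv (fun s => Real.sqrt (G s))) (u x)) (u x) :=
    (hphi_deriv_diff hG (hGu x)).hasDerivAt
  have h2 : HasFDerivAt u (fderiv ℝ u x) x :=
    (hu.differentiable (by norm_num) x).hasFDerivAt
  have h3 := (h1.comp_hasFDerivAt x h2).fderiv
  rw [pd, show (fun y => deriv (fun s => Real.sqrt (G s)) (u y))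
      = (deriv fun s => Real.sqrt (G s)) ∘ u from rfl, h3]
  rfl

lemma pdd_w (hG : ContDiff ℝ 2 G) (hu : ContDiff ℝ 2 u) (hGu : ∀ x, 0 < G (u x)) (i : Fin N) (x) :
    pdd (fun x => Real.sqrt (G (u x))) i x
      = deriv (deriv (fun s => Real.sqrt (G s))) (u x) * (pd u i x)^2
        + deriv (fun s => Real.sqrt (G s)) (u x) * pdd u i x := by
  have hfun : (fun y => pd (fun x => Real.sqrt (G (u x))) i y)
      = fun y => deriv (fun s => Real.sqrt (G s)) (u y) * pd u i y := by
    funext y; exact pd_w hG hu hGu i y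
  have hA : DifferentiableAt ℝ (fun y => deriv (fun s => Real.sqrt (G s)) (u y)) x :=
    (hphi_deriv_diff hG (hGu x)).comp x (hu.differentiable (by norm_num) x)
  have hB : DifferentiableAt ℝ (pd u i) x := (contDiff_pd hu i).differentiable (by norm_num) x
  rw [pdd, hfun, fderiv_fun_mul hA hB]
  have : (deriv (fun s => Real.sqrt (G s)) (u x) • fderiv ℝ (pd u i) x
      + pd u i x • fderiv ℝ (fun y => deriv (fun s => Real.sqrt (G s)) (u y)) x) (e i)
      = deriv (fun s => Real.sqrt (G s)) (u x) * pdd u i x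
        + pd u i x * pd (fun y => deriv (fun s => Real.sqrt (G s)) (u y)) i x := rfl
  rw [this, pd_comp_deriv hG hu hGu i x]
  ring

lemma cont_phi_u (hG : ContDiff ℝ 2 G) (hu : ContDiff ℝ 2 u) (hGu : ∀ x, 0 < G (u x)) :
    Continuous (fun x => deriv (fun s => Real.sqrt (G s)) (u x)) :=
  (hphi_deriv_contOn hG).comp_continuous hu.continuous (fun x => hGu x)

lemma cont_phi2_u (hG : ContDiff ℝ 2 G) (hu : ContDiff ℝ 2 u) (hGu : ∀ x, 0 < G (u x)) :
    Continuous (fun x => deriv (deriv (fun s => Real.sqrt (G s))) (u x)) :=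
  (hphi_dd_contOn hG).comp_continuous hu.continuous (fun x => hGu x)

end Chain

section Core
variable {G : ℝ → ℝ} {u : EuclideanSpace ℝ (Fin N) → ℝ}

lemma pd_mul {f g : EuclideanSpace ℝ (Fin N) → ℝ} {x} (hf : DifferentiableAt ℝ f x)
    (hg : DifferentiableAt ℝ g x) (i : Fin N) :
    pd (fun y => f y * g y) i x = pd f i x * g x + f x * pd g i x := by
  rw [pd, fderiv_fun_mul hf hg]
  have : (f x • fderiv ℝ g x + g x • fderiv ℝ f x) (e i)
      = f x * fderiv ℝ g x (e i) + g x * fderiv ℝ f x (e i) := rfl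
  rw [this, pd, pd]; ring

lemma pd_zero_outside {f : EuclideanSpace ℝ (Fin N) → ℝ} {x} (hx : x ∉ tsupport f) (i : Fin N) :
    pd f i x = 0 := by
  have h : fderiv ℝ f x = 0 := by
    by_contra h
    exact hx (support_fderiv_subset ℝ (Function.mem_support.2 h))
  simp [pd, h]

lemma coeff_algebra (hG : ContDiff ℝ 2 G) (hGnn : ∀ s, 0 ≤ G s) {s t2 : ℝ} (hs : 0 < G s) :
    deriv (deriv G) s * (Real.sqrt (G s))^2
      - Real.sqrt (G s) * (deriv (deriv (fun r => Real.sqrt (G r))) s * t2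
          + deriv (fun r => Real.sqrt (G r)) s * deriv G s)
    = -((G s - t2/2) * (-2 * deriv (deriv (fun r => Real.sqrt (G r))) s) * Real.sqrt (G s)) := by
  have h1 := derivG_eq hG hGnn hs
  have h2 := derivderivG_eq hG hGnn hs
  have hp : Real.sqrt (G s)^2 = G s := Real.sq_sqrt (hGnn s)
  rw [h1, h2]
  linear_combination (2 * Real.sqrt (G s) * deriv (deriv (fun r => Real.sqrt (G r))) s) * hp

end Core

section CoreInt
variable {G : ℝ → ℝ} {u : EuclideanSpace ℝ (Fin N) → ℝ}

lemma core (hG : ContDiff ℝ 2 G) (hGnn : ∀ s, 0 ≤ G s) (hu : ContDiff ℝ 2 u)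
    (hGu : ∀ x, 0 < G (u x)) (heq : ∀ x, laplacian u x = deriv G (u x))
    {μ : EuclideanSpace ℝ (Fin N) → ℝ} (hμ : ContDiff ℝ 1 μ) (hcs : HasCompactSupport μ) :
    ∫ x, (‖gradient (fun y => Real.sqrt (G (u y)) * μ y) x‖^2
        + deriv (deriv G) (u x) * (Real.sqrt (G (u x)) * μ x)^2)
      = (∫ x, G (u x) * ‖gradient μ x‖^2)
        - ∫ x, (G (u x) - ‖gradient u x‖^2/2) *
            (-2 * deriv (deriv (fun s => Real.sqrt (G s))) (u x)) *
            Real.sqrt (G (u x)) * (μ x)^2 := by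
  set w : EuclideanSpace ℝ (Fin N) → ℝ := fun x => Real.sqrt (G (u x)) with hwdef
  have hw : ContDiff ℝ 2 w := hw2 hG hu hGu
  have hw1 : ContDiff ℝ 1 w := hw.of_le (by norm_num)
  have hwd : Differentiable ℝ w := hw.differentiable (by norm_num)
  have hμd : Differentiable ℝ μ := hμ.differentiable (by norm_num)
  have hud : Differentiable ℝ u := hu.differentiable (by norm_num)
  -- F i = w * ∂ᵢ w, C¹
  have hF1 : ∀ i : Fin N, ContDiff ℝ 1 (fun y => w y * pd w i y) :=
    fun i => hw1.mul (contDiff_pd hw i)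
  have hFd : ∀ i : Fin N, Differentiable ℝ (fun y => w y * pd w i y) :=
    fun i => (hF1 i).differentiable (by norm_num)
  have hsq1 : ContDiff ℝ 1 (fun y => μ y * μ y) := hμ.mul hμ
  have hsqd : Differentiable ℝ (fun y => μ y * μ y) := hsq1.differentiable (by norm_num)
  have hsqcs : HasCompactSupport (fun y => μ y * μ y) := by
    apply hcs.mono'
    intro x hx
    have : μ x ≠ 0 := fun h => by simp [h] at hx
    exact subset_tsupport μ this
  -- support facts
  have hsub : ∀ {g : EuclideanSpace ℝ (Fin N) → ℝ},
      (∀ x, x ∉ tsupport μ → g x = 0) → HasCompactSupport g := by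
    intro g h
    apply hcs.mono'
    intro x hx
    by_contra hxt
    exact hx (h x hxt)
  have integ : ∀ {g : EuclideanSpace ℝ (Fin N) → ℝ}, Continuous g → HasCompactSupport g →
      Integrable g := fun hg hcsg => hg.integrable_of_hasCompactSupport hcsg
  have hμcont := hμ.continuous
  have hwcont := hw.continuous
  -- integration by parts in each direction
  have ibp : ∀ i : Fin N,
      ∫ x, (w x * pd w i x) * pd (fun y => μ y * μ y) i x
        = - ∫ x, pd (fun y => w y * pd w i y) i x * (μ x * μ x) := by
    intro i
    have h1 : Integrable (fun x =>
        fderiv ℝ (fun y => w y * pd w i y) x (e i) * (μ x * μ x)) :=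
      integ ((cont_pd (hF1 i) i).mul (hμcont.mul hμcont))
        (hsub fun x hx => by simp [image_eq_zero_of_notMem_tsupport hx])
    have h2 : Integrable (fun x =>
        (w x * pd w i x) * fderiv ℝ (fun y => μ y * μ y) x (e i)) :=
      integ ((hwcont.mul (cont_pd hw1 i)).mul (cont_pd hsq1 i))
        (hsub fun x hx => by
          have h0 : fderiv ℝ (fun y => μ y * μ y) x (e i) = 0 := by
            have := pd_mul (hμd x) (hμd x) i (f := μ) (g := μ)
            rw [pd] at this
            rw [this, image_eq_zero_of_notMem_tsupport hx]; ring
          simp [h0])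
    have h3 : Integrable (fun x => (w x * pd w i x) * (μ x * μ x)) :=
      integ ((hwcont.mul (cont_pd hw1 i)).mul (hμcont.mul hμcont))
        (hsub fun x hx => by simp [image_eq_zero_of_notMem_tsupport hx])
    exact integral_mul_fderiv_eq_neg_fderiv_mul_of_integrable h1 h2 h3 (fun x _ => hFd i x) (fun x _ => hsqd x)
  -- pointwise expansion of the quadratic form integrand
  have key : ∀ x, ‖gradient (fun y => w y * μ y) x‖^2 + deriv (deriv G) (u x) * (w x * μ x)^2
      = (G (u x) * ∑ i, (pd μ i x)^2)
        + ((∑ i, (w x * pd w i x) * pd (fun y => μ y * μ y) i x)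
          + ((∑ i, pd w i x * pd w i x) + deriv (deriv G) (u x) * (w x)^2) * (μ x * μ x)) := by
    intro x
    rw [grad_norm_sq']
    have hpd : ∀ i, pd (fun y => w y * μ y) i x = pd w i x * μ x + w x * pd μ i x :=
      fun i => pd_mul (hwd x) (hμd x) i
    have hsq : ∀ i, pd (fun y => μ y * μ y) i x = pd μ i x * μ x + μ x * pd μ i x :=
      fun i => pd_mul (hμd x) (hμd x) i
    have hw2x : w x ^ 2 = G (u x) := Real.sq_sqrt (hGnn (u x))
    have expand : ∀ i ∈ Finset.univ, (pd (fun y => w y * μ y) i x)^2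
        = w x ^ 2 * (pd μ i x)^2 + ((w x * pd w i x) * pd (fun y => μ y * μ y) i x
          + (pd w i x * pd w i x) * (μ x * μ x)) := by
      intro i _
      rw [hpd i, hsq i]; ring
    rw [Finset.sum_congr rfl expand, Finset.sum_add_distrib, Finset.sum_add_distrib,
      ← Finset.mul_sum, add_mul, Finset.sum_mul]
    linear_combination (∑ i, (pd μ i x)^2) * hw2x
  -- the divergence sum
  have hpdF : ∀ (i : Fin N) x, pd (fun y => w y * pd w i y) i x
      = pd w i x * pd w i x + w x * pdd w i x := by
    intro i x
    have h := pd_mul (hwd x) ((contDiff_pd hw i).differentiable (by norm_num) x) i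
    rw [h]
    rfl
  have hSsum : ∀ x, ∑ i, pd (fun y => w y * pd w i y) i x
      = (∑ i, pd w i x * pd w i x)
        + w x * (deriv (deriv (fun s => Real.sqrt (G s))) (u x) * ‖gradient u x‖^2
          + deriv (fun s => Real.sqrt (G s)) (u x) * deriv G (u x)) := by
    intro x
    have h1 : ∀ i ∈ Finset.univ, pd (fun y => w y * pd w i y) i x
        = pd w i x * pd w i x + w x * (deriv (deriv (fun s => Real.sqrt (G s))) (u x)
            * (pd u i x)^2 + deriv (fun s => Real.sqrt (G s)) (u x) * pdd u i x) := by
      intro i _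
      rw [hpdF i x, pdd_w hG hu hGu i x]
    rw [Finset.sum_congr rfl h1, Finset.sum_add_distrib, ← Finset.mul_sum,
      Finset.sum_add_distrib, ← Finset.mul_sum, ← Finset.mul_sum, grad_norm_sq',
      ← laplacian_eq_sum_pdd, heq x]
  -- integrability of the three pieces
  have hT1int : Integrable (fun x => G (u x) * ∑ i, (pd μ i x)^2) :=
    integ ((hG.continuous.comp hu.continuous).mul
        (continuous_finset_sum _ fun i _ => (cont_pd hμ i).mul (cont_pd hμ i) |>.congr
          (fun x => (sq (pd μ i x)).symm ▸ rfl)))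
      (hsub fun x hx => by
        have : ∀ i ∈ Finset.univ, (pd μ i x)^2 = 0 := fun i _ => by
          rw [pd_zero_outside hx]; ring
        rw [Finset.sum_congr rfl this]; simp)
  have hT2int : ∀ i : Fin N, Integrable
      (fun x => (w x * pd w i x) * pd (fun y => μ y * μ y) i x) :=
    fun i => integ ((hwcont.mul (cont_pd hw1 i)).mul (cont_pd hsq1 i))
      (hsub fun x hx => by
        have h0 : pd (fun y => μ y * μ y) i x = 0 := by
          rw [pd_mul (hμd x) (hμd x) i, image_eq_zero_of_notMem_tsupport hx]; ring
        simp [h0])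
  have hT3int : Integrable (fun x =>
      ((∑ i, pd w i x * pd w i x) + deriv (deriv G) (u x) * (w x)^2) * (μ x * μ x)) := by
    refine integ (Continuous.mul ?_ (hμcont.mul hμcont))
      (hsub fun x hx => by simp [image_eq_zero_of_notMem_tsupport hx])
    exact (continuous_finset_sum _ fun i _ => (cont_pd hw1 i).mul (cont_pd hw1 i)).add
      (((contDiff_succ_iff_deriv.1 hG).2.2.continuous_deriv le_rfl).comp hu.continuous |>.mul
        (hwcont.mul hwcont |>.congr fun x => (sq (w x)).symm ▸ rfl))
  have hT4int : ∀ i : Fin N, Integrable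
      (fun x => pd (fun y => w y * pd w i y) i x * (μ x * μ x)) :=
    fun i => integ ((cont_pd (hF1 i) i).mul (hμcont.mul hμcont))
      (hsub fun x hx => by simp [image_eq_zero_of_notMem_tsupport hx])
  -- assemble
  show (∫ x, (‖gradient (fun y => w y * μ y) x‖^2
        + deriv (deriv G) (u x) * (w x * μ x)^2))
      = (∫ x, G (u x) * ‖gradient μ x‖^2)
        - ∫ x, (G (u x) - ‖gradient u x‖^2/2) *
            (-2 * deriv (deriv (fun s => Real.sqrt (G s))) (u x)) * w x * (μ x)^2
  have hT5int : Integrable (fun x =>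
      (∑ i, pd (fun y => w y * pd w i y) i x) * (μ x * μ x)) :=
    (integrable_finset_sum _ (fun i (_ : i ∈ Finset.univ) => hT4int i)).congr
      (Filter.Eventually.of_forall fun x => (Finset.sum_mul _ _ _).symm)
  have hibp2 : ∑ i, ∫ x, (w x * pd w i x) * pd (fun y => μ y * μ y) i x
      = - ∫ x, (∑ i, pd (fun y => w y * pd w i y) i x) * (μ x * μ x) := by
    rw [Finset.sum_congr rfl (fun i _ => ibp i), Finset.sum_neg_distrib]
    congr 1
    rw [← integral_finset_sum _ (fun i _ => hT4int i)]
    congr 1; funext x; rw [Finset.sum_mul]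
  have hT1eq : ∫ x, G (u x) * ∑ i, (pd μ i x)^2 = ∫ x, G (u x) * ‖gradient μ x‖^2 := by
    congr 1; funext x; rw [grad_norm_sq']
  have hfinal : (∫ x, ((∑ i, pd w i x * pd w i x)
          + deriv (deriv G) (u x) * (w x)^2) * (μ x * μ x))
      - ∫ x, (∑ i, pd (fun y => w y * pd w i y) i x) * (μ x * μ x)
      = - ∫ x, (G (u x) - ‖gradient u x‖^2/2) *
          (-2 * deriv (deriv (fun s => Real.sqrt (G s))) (u x)) * w x * (μ x)^2 := by
    rw [← integral_sub hT3int hT5int, ← integral_neg]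
    congr 1; funext x
    rw [hSsum x]
    have hcoeff := coeff_algebra hG hGnn (hGu x) (t2 := ‖gradient u x‖^2)
    simp only [hwdef]
    linear_combination (μ x * μ x) * hcoeff
  have hT2sum : Integrable (fun x => ∑ i, (w x * pd w i x) * pd (fun y => μ y * μ y) i x) :=
    integrable_finset_sum _ (fun i (_ : i ∈ Finset.univ) => hT2int i)
  have hT23int : Integrable (fun x =>
      (∑ i, (w x * pd w i x) * pd (fun y => μ y * μ y) i x)
        + ((∑ i, pd w i x * pd w i x) + deriv (deriv G) (u x) * (w x)^2) * (μ x * μ x)) :=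
    hT2sum.add hT3int
  rw [funext key, integral_add hT1int hT23int]
  rw [integral_add hT2sum hT3int,
    integral_finset_sum _ (fun i _ => hT2int i), hibp2, hT1eq]
  linarith [hfinal]



end CoreInt

end SChar

theorem stability_characterization (N : ℕ) (G : ℝ → ℝ) (hG : ContDiff ℝ 2 G)
    (hGnonneg : ∀ s, 0 ≤ G s)
    (u : EuclideanSpace ℝ (Fin N) → ℝ) (hu : ContDiff ℝ 2 u)
    (hbdd : ∃ M : ℝ, ∀ x, |u x| ≤ M)
    (hnonconst : ¬ ∃ c : ℝ, ∀ x, u x = c)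
    (heq : ∀ x, laplacian u x = deriv G (u x))
    (hGu : ∀ x, 0 < G (u x)) :
    (∀ v : EuclideanSpace ℝ (Fin N) → ℝ, ContDiff ℝ 1 v → HasCompactSupport v →
        0 ≤ ∫ x, (‖gradient v x‖ ^ 2 + deriv (deriv G) (u x) * (v x) ^ 2)) ↔
    (∀ μ : EuclideanSpace ℝ (Fin N) → ℝ, ContDiff ℝ 1 μ → HasCompactSupport μ →
        ∫ x, (G (u x) - ‖gradient u x‖ ^ 2 / 2) *
            (-2 * deriv (deriv (fun s => Real.sqrt (G s))) (u x)) *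
            Real.sqrt (G (u x)) * (μ x) ^ 2 ≤
          ∫ x, G (u x) * ‖gradient μ x‖ ^ 2) := by

  constructor
  · intro hstab μ hμ hcs
    have h := SChar.core hG hGnonneg hu hGu heq hμ hcs
    have hv1 : ContDiff ℝ 1 (fun y => Real.sqrt (G (u y)) * μ y) :=
      ((SChar.hw2 hG hu hGu).of_le (by norm_num)).mul hμ
    have hvcs : HasCompactSupport (fun y => Real.sqrt (G (u y)) * μ y) := by
      apply hcs.mono'
      intro x hx
      apply subset_tsupport μ
      intro h0
      exact hx (by simp [h0])
    have h0 := hstab _ hv1 hvcs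
    have h0' := le_of_le_of_eq h0 h
    linarith
  · intro hineq v hv hvcs
    have hwpos : ∀ x, 0 < Real.sqrt (G (u x)) := fun x => Real.sqrt_pos.2 (hGu x)
    set μ : EuclideanSpace ℝ (Fin N) → ℝ := fun y => v y / Real.sqrt (G (u y)) with hμdef
    have hμ1 : ContDiff ℝ 1 μ :=
      hv.div ((SChar.hw2 hG hu hGu).of_le (by norm_num)) (fun x => ne_of_gt (hwpos x))
    have hμcs : HasCompactSupport μ := by
      apply hvcs.mono'
      intro x hx
      apply subset_tsupport v
      intro h0
      exact hx (by simp [hμdef, h0])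
    have hvw : (fun y => Real.sqrt (G (u y)) * μ y) = v := by
      funext y
      rw [hμdef]
      field_simp
      exact mul_div_cancel_left₀ _ (ne_of_gt (hwpos y))
    have h := SChar.core hG hGnonneg hu hGu heq hμ1 hμcs
    have h' : ∫ x, (‖gradient v x‖ ^ 2 + deriv (deriv G) (u x) * (v x) ^ 2)
        = (∫ x, G (u x) * ‖gradient μ x‖^2)
          - ∫ x, (G (u x) - ‖gradient u x‖^2/2) *
              (-2 * deriv (deriv (fun s => Real.sqrt (G s))) (u x)) *
              Real.sqrt (G (u x)) * (μ x)^2 := by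
      rw [← hvw]
      exact h
    rw [h']
    have h2 := hineq μ hμ1 hμcs
    linarith
end
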